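/- Let Γ be a finitely generated group generated by a finite symmetric set S containing the identity, and suppose there exist constants c > 0, d ≥ 1, and 0 < α ≤ 1 with |S^n| = c·n^d + O(n^{d−α}). Then the spheres satisfy |S^n \ S^{n−1}| = O(n^{d−α}), and moreover |S^n \ S^{n−1}| ≥ C₁ n^{d−1} for some constant C₁ > 0 and all n. -/

import Mathlib

open Pointwise Asymptotics Filter

section Aux
variable {Γ : Type*} [Group Γ] [DecidableEq Γ] (S : Finset Γ)

lemma ball_mono (hone : (1:Γ) ∈ S) {m n : ℕ} (h : m ≤ n) : S ^ m ⊆ S ^ n :=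
  Finset.pow_subset_pow_right hone h

lemma exists_mem_pow (hsym : S⁻¹ = S)
    (hgen : Subgroup.closure (S : Set Γ) = ⊤) (x : Γ) : ∃ n, x ∈ S ^ n := by
  have : x ∈ (⊤ : Subgroup Γ) := trivial
  rw [← hgen] at this
  refine Subgroup.closure_induction (fun y hy => ⟨1, by simpa using hy⟩) ⟨0, by simp⟩
    (fun y z _ _ ⟨a, ha⟩ ⟨b, hb⟩ => ⟨a + b, by rw [pow_add]; exact Finset.mul_mem_mul ha hb⟩)
    (fun y _ ⟨a, ha⟩ => ⟨a, by
      have : y⁻¹ ∈ (S ^ a)⁻¹ := by simpa using ha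
      rwa [← inv_pow, hsym] at this⟩) this
end Aux

section Len
variable {Γ : Type*} [Group Γ] [DecidableEq Γ] (S : Finset Γ)
  (hex : ∀ x : Γ, ∃ n, x ∈ S ^ n)

noncomputable def len (x : Γ) : ℕ := Nat.find (hex x)

lemma len_spec (x : Γ) : x ∈ S ^ (len S hex x) := Nat.find_spec (hex x)

lemma len_le_iff (hone : (1:Γ) ∈ S) {x : Γ} {n : ℕ} : len S hex x ≤ n ↔ x ∈ S ^ n :=
  ⟨fun h => ball_mono S hone h (len_spec S hex x), fun h => Nat.find_le h⟩

lemma len_mul_le (hone : (1:Γ) ∈ S) (x y : Γ) :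
    len S hex (x * y) ≤ len S hex x + len S hex y := by
  rw [len_le_iff S hex hone, pow_add]
  exact Finset.mul_mem_mul (len_spec S hex x) (len_spec S hex y)

lemma len_inv_le (hsym : S⁻¹ = S) (hone : (1:Γ) ∈ S) (x : Γ) :
    len S hex x⁻¹ ≤ len S hex x := by
  rw [len_le_iff S hex hone]
  have h : x⁻¹ ∈ (S ^ (len S hex x))⁻¹ := by
    rw [Finset.mem_inv']; simpa using len_spec S hex x
  rwa [← inv_pow, hsym] at h

lemma len_inv (hsym : S⁻¹ = S) (hone : (1:Γ) ∈ S) (x : Γ) :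
    len S hex x⁻¹ = len S hex x := by
  refine le_antisymm (len_inv_le S hex hsym hone x) ?_
  have := len_inv_le S hex hsym hone x⁻¹
  rwa [inv_inv] at this

lemma mem_sphere_iff (hone : (1:Γ) ∈ S) {x : Γ} {n : ℕ} (hn : 1 ≤ n) :
    x ∈ S ^ n \ S ^ (n-1) ↔ len S hex x = n := by
  rw [Finset.mem_sdiff, ← len_le_iff S hex hone, ← len_le_iff S hex hone]
  omega

lemma len_step (hsym : S⁻¹ = S) (hone : (1:Γ) ∈ S) (x : Γ) {s : Γ} (hs : s ∈ S) :
    len S hex (x * s) ≤ len S hex x + 1 ∧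
    len S hex x ≤ len S hex (x * s) + 1 := by
  have h1 : len S hex s ≤ 1 := by rw [len_le_iff S hex hone]; simpa using hs
  have h2 : len S hex s⁻¹ ≤ 1 := by rw [len_inv S hex hsym hone]; exact h1
  refine ⟨(len_mul_le S hex hone x s).trans (by omega), ?_⟩
  have := len_mul_le S hex hone (x * s) s⁻¹
  rw [mul_assoc, mul_inv_cancel, mul_one] at this
  omega
end Len

lemma nat_ivt {f : ℕ → ℕ} {m n : ℕ}
    (hstep : ∀ i, f (i+1) ≤ f i + 1 ∧ f i ≤ f (i+1) + 1)
    (h0 : f 0 ≤ n) (hm : n ≤ f m) : ∃ i, i ≤ m ∧ f i = n := by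
  have hP : ∃ i, n ≤ f i := ⟨m, hm⟩
  classical
  set j := Nat.find hP with hj
  have hjm : j ≤ m := Nat.find_le hm
  have hjn : n ≤ f j := Nat.find_spec hP
  rcases Nat.eq_zero_or_pos j with h | h
  · rw [h] at hjn
    exact ⟨0, by omega, by omega⟩
  · have hlt : ¬ n ≤ f (j-1) := Nat.find_min hP (by omega)
    have := (hstep (j-1)).1
    have hj1 : j - 1 + 1 = j := by omega
    rw [hj1] at this
    exact ⟨j, hjm, by omega⟩

lemma ball_card_le_sphere {Γ : Type*} [Group Γ] [DecidableEq Γ] (S : Finset Γ)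
    (hsym : S⁻¹ = S) (hone : (1:Γ) ∈ S) (hex : ∀ x : Γ, ∃ n, x ∈ S ^ n)
    {n : ℕ} (hn : 1 ≤ n) (hw : (S ^ (2*n) \ S ^ (2*n-1)).Nonempty) :
    (S ^ n).card ≤ (2*n+1) * (S ^ n \ S ^ (n-1)).card := by
  classical
  obtain ⟨w, hwmem⟩ := hw
  have hlw : len S hex w = 2*n := (mem_sphere_iff S hex hone (by omega)).1 hwmem
  obtain ⟨f, hf⟩ := Finset.mem_pow.1 ((mem_sphere_iff S hex hone (by omega)).2 hlw
    |> (Finset.mem_sdiff.1 · |>.1))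
  set l : List Γ := List.ofFn (fun i => (f i : Γ)) with hl
  have hlen : l.length = 2*n := by simp [hl]
  have hprod : l.prod = w := hf
  have hmem : ∀ a ∈ l, a ∈ S := by
    intro a ha
    rw [hl, List.mem_ofFn] at ha
    obtain ⟨i, rfl⟩ := ha
    exact (f i).2
  set p : ℕ → Γ := fun i => (l.take i).prod with hp
  -- step bounds for the function i ↦ len (g * p i)
  have hstep : ∀ (g : Γ) (i : ℕ),
      len S hex (g * p (i+1)) ≤ len S hex (g * p i) + 1 ∧
      len S hex (g * p i) ≤ len S hex (g * p (i+1)) + 1 := by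
    intro g i
    by_cases hi : i < l.length
    · have : p (i+1) = p i * l[i] := by
        rw [hp]; exact List.prod_take_succ l i hi
      rw [this, ← mul_assoc]
      exact len_step S hex hsym hone (g * p i) (hmem _ (List.getElem_mem hi))
    · have : p (i+1) = p i := by
        rw [hp]; simp only []
        rw [List.take_of_length_le (by omega), List.take_of_length_le (by omega)]
      rw [this]; omega
  -- existence of a crossing index for g ∈ S^n
  have hcross : ∀ g ∈ S ^ n, ∃ i, i ≤ 2*n ∧ len S hex (g * p i) = n := by
    intro g hg
    have h0 : len S hex (g * p 0) ≤ n := by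
      have hp0 : p 0 = 1 := by simp [hp]
      rw [hp0, mul_one]
      exact (len_le_iff S hex hone).2 hg
    have hm : n ≤ len S hex (g * p (2*n)) := by
      have hpw : p (2*n) = w := by
        simp only [hp]
        rw [List.take_of_length_le (by omega)]
        exact hprod
      have h1 : len S hex w ≤ len S hex g⁻¹ + len S hex (g * w) := by
        have := len_mul_le S hex hone g⁻¹ (g * w)
        rwa [← mul_assoc, inv_mul_cancel, one_mul] at this
      have h2 : len S hex g⁻¹ = len S hex g := len_inv S hex hsym hone g
      have h3 : len S hex g ≤ n := (len_le_iff S hex hone).2 hg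
      rw [hpw]; omega
    obtain ⟨i, hi, hfi⟩ := nat_ivt (f := fun i => len S hex (g * p i)) (hstep g) h0 hm
    exact ⟨i, hi, hfi⟩
  -- the injection
  set F : Γ → ℕ × Γ := fun g =>
    if h : ∃ i, i ≤ 2*n ∧ len S hex (g * p i) = n then
      (Nat.find h, g * p (Nat.find h)) else (0, 1) with hF
  have hmaps : ∀ g ∈ S ^ n, F g ∈ (Finset.range (2*n+1)) ×ˢ (S ^ n \ S ^ (n-1)) := by
    intro g hg
    have h := hcross g hg
    rw [hF]; simp only [dif_pos h]
    obtain ⟨hi, hfi⟩ := Nat.find_spec h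
    refine Finset.mem_product.2 ⟨Finset.mem_range.2 (by omega), ?_⟩
    exact (mem_sphere_iff S hex hone hn).2 hfi
  have hinj : Set.InjOn F (((S ^ n : Finset Γ) : Set Γ)) := by
    intro g₁ hg₁ g₂ hg₂ heq
    have h1 := hcross g₁ (Finset.mem_coe.1 hg₁)
    have h2 := hcross g₂ (Finset.mem_coe.1 hg₂)
    rw [hF] at heq; simp only [dif_pos h1, dif_pos h2, Prod.mk.injEq] at heq
    obtain ⟨he1, he2⟩ := heq
    rw [he1] at he2
    exact mul_right_cancel he2
  calc (S ^ n).card ≤ ((Finset.range (2*n+1)) ×ˢ (S ^ n \ S ^ (n-1))).card :=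
        Finset.card_le_card_of_injOn F hmaps hinj
    _ = (2*n+1) * (S ^ n \ S ^ (n-1)).card := by
        rw [Finset.card_product, Finset.card_range]

lemma sphere_nonempty_of_unbounded {Γ : Type*} [Group Γ] [DecidableEq Γ] (S : Finset Γ)
    (hone : (1:Γ) ∈ S) (hub : ∀ B : ℕ, ∃ m, B < (S ^ m).card)
    {n : ℕ} (hn : 1 ≤ n) : (S ^ n \ S ^ (n-1)).Nonempty := by
  by_contra h
  rw [Finset.not_nonempty_iff_eq_empty, Finset.sdiff_eq_empty_iff_subset] at h
  have heq : S ^ n = S ^ (n-1) := subset_antisymm h (ball_mono S hone (by omega))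
  have hstab : ∀ m, n - 1 ≤ m → S ^ m = S ^ (n-1) := by
    intro m hm
    induction m with
    | zero => have h0 : n - 1 = 0 := by omega
              rw [h0]
    | succ k ih =>
      rcases Nat.lt_or_ge k (n-1) with hk | hk
      · have h1 : k + 1 = n - 1 := by omega
        rw [h1]
      · have hk' := ih hk
        have h2 : S ^ (k+1) = S ^ (n-1+1) := by rw [pow_succ, pow_succ, hk']
        have h3 : n - 1 + 1 = n := by omega
        rw [h2, h3, heq]
  obtain ⟨m, hm⟩ := hub (S ^ (n-1)).card
  rcases le_or_gt (n-1) m with h' | h'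
  · rw [hstab m h'] at hm; omega
  · have := Finset.card_le_card (ball_mono S hone (le_of_lt h'))
    omega

/-- **Volume of spheres from volume of balls.** Let `Γ` be generated by a
finite symmetric set `S` containing the identity, and suppose
`|S^n| = c·n^d + O(n^{d−α})` with `c > 0`, `d ≥ 1`, `0 < α ≤ 1`. Then the
spheres satisfy `|S^n \ S^{n−1}| = O(n^{d−α})` and `|S^n \ S^{n−1}| ≥ C₁·n^{d−1}`
for some `C₁ > 0` and all `n ≥ 1`. -/
theorem sphere_volume_bounds {Γ : Type*} [Group Γ] [DecidableEq Γ]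
    (S : Finset Γ) (hsym : S⁻¹ = S) (hone : (1 : Γ) ∈ S)
    (hgen : Subgroup.closure (S : Set Γ) = ⊤)
    (c d α : ℝ) (hc : 0 < c) (hd : 1 ≤ d) (hα : 0 < α) (hα1 : α ≤ 1)
    (hball : (fun n : ℕ => ((S ^ n).card : ℝ) - c * (n : ℝ) ^ d)
      =O[atTop] fun n : ℕ => (n : ℝ) ^ (d - α)) :
    ((fun n : ℕ => (((S ^ n) \ (S ^ (n - 1))).card : ℝ))
        =O[atTop] fun n : ℕ => (n : ℝ) ^ (d - α)) ∧
    ∃ C₁ : ℝ, 0 < C₁ ∧ ∀ n : ℕ, 1 ≤ n →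
      C₁ * (n : ℝ) ^ (d - 1) ≤ (((S ^ n) \ (S ^ (n - 1))).card : ℝ) := by
  have hex : ∀ x : Γ, ∃ n, x ∈ S ^ n := exists_mem_pow S hsym hgen
  have hdα : 0 ≤ d - α := by linarith
  have hd1 : 0 ≤ d - 1 := by linarith
  have hsub : ∀ n : ℕ, 1 ≤ n →
      (((S ^ n) \ (S ^ (n-1))).card : ℝ) = ((S ^ n).card : ℝ) - ((S ^ (n-1)).card : ℝ) := by
    intro n hn
    rw [Finset.card_sdiff_of_subset (ball_mono S hone (by omega)),
      Nat.cast_sub (Finset.card_le_card (ball_mono S hone (by omega)))]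
  constructor
  · -- Part 1: big-O bound
    have B : (fun n : ℕ => ((S ^ (n-1)).card : ℝ) - c * ((n-1 : ℕ) : ℝ) ^ d)
        =O[atTop] fun n : ℕ => (n : ℝ) ^ (d - α) := by
      refine (hball.comp_tendsto (tendsto_sub_atTop_nat 1)).trans (IsBigO.of_bound 1 ?_)
      filter_upwards [eventually_ge_atTop 1] with n hn
      simp only [Function.comp_apply, one_mul, Real.norm_eq_abs]
      rw [abs_of_nonneg (Real.rpow_nonneg (Nat.cast_nonneg _) _),
        abs_of_nonneg (Real.rpow_nonneg (Nat.cast_nonneg _) _)]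
      exact Real.rpow_le_rpow (Nat.cast_nonneg _) (Nat.cast_le.2 (Nat.sub_le n 1)) hdα
    have C : (fun n : ℕ => c * ((n : ℝ) ^ d - ((n-1 : ℕ) : ℝ) ^ d))
        =O[atTop] fun n : ℕ => (n : ℝ) ^ (d - α) := by
      refine IsBigO.of_bound (c * d) ?_
      filter_upwards [eventually_ge_atTop 1] with n hn
      have hN1 : (1:ℝ) ≤ (n:ℝ) := by exact_mod_cast hn
      have hN0 : (0:ℝ) < (n:ℝ) := by linarith
      have hcast : ((n-1 : ℕ) : ℝ) = (n:ℝ) - 1 := by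
        rw [Nat.cast_sub hn]; norm_num
      have hinv : (0:ℝ) ≤ 1 - (n:ℝ)⁻¹ := by
        rw [sub_nonneg]
        exact inv_le_one_of_one_le₀ hN1
      have hfact : (n:ℝ) - 1 = (n:ℝ) * (1 - (n:ℝ)⁻¹) := by
        field_simp
      have hbern : 1 - d * (n:ℝ)⁻¹ ≤ (1 - (n:ℝ)⁻¹) ^ d := by
        have := one_add_mul_self_le_rpow_one_add (s := -(n:ℝ)⁻¹)
          (by rw [neg_le, neg_neg]; exact inv_le_one_of_one_le₀ hN1) hd
        rw [← sub_eq_add_neg] at this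
        calc 1 - d * (n:ℝ)⁻¹ = 1 + d * (-(n:ℝ)⁻¹) := by ring
          _ ≤ (1 + -(n:ℝ)⁻¹) ^ d := this
          _ = (1 - (n:ℝ)⁻¹) ^ d := by rw [← sub_eq_add_neg]
      have hmul : ((n:ℝ) - 1) ^ d = (n:ℝ) ^ d * (1 - (n:ℝ)⁻¹) ^ d := by
        rw [hfact, Real.mul_rpow (le_of_lt hN0) hinv]
      have hpow1 : (n:ℝ) ^ (d-1) = (n:ℝ) ^ d * (n:ℝ)⁻¹ := by
        rw [Real.rpow_sub_one (ne_of_gt hN0), div_eq_mul_inv]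
      have hkey : (n:ℝ) ^ d - ((n:ℝ) - 1) ^ d ≤ d * (n:ℝ) ^ (d-1) := by
        have hnd : (0:ℝ) ≤ (n:ℝ) ^ d := Real.rpow_nonneg (le_of_lt hN0) _
        have h2 : (n:ℝ) ^ d * (1 - d * (n:ℝ)⁻¹) ≤ (n:ℝ) ^ d * (1 - (n:ℝ)⁻¹) ^ d :=
          mul_le_mul_of_nonneg_left hbern hnd
        rw [← hmul] at h2
        rw [hpow1]
        nlinarith [h2]
      have hnonneg : 0 ≤ (n:ℝ) ^ d - ((n:ℝ) - 1) ^ d := by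
        rw [sub_nonneg]
        exact Real.rpow_le_rpow (by linarith) (by linarith) (by linarith)
      have hexp : (n:ℝ) ^ (d-1) ≤ (n:ℝ) ^ (d-α) :=
        Real.rpow_le_rpow_of_exponent_le hN1 (by linarith)
      rw [Real.norm_eq_abs, Real.norm_eq_abs, hcast,
        abs_of_nonneg (by nlinarith : (0:ℝ) ≤ c * ((n:ℝ) ^ d - ((n:ℝ) - 1) ^ d)),
        abs_of_nonneg (Real.rpow_nonneg (le_of_lt hN0) _)]
      have hd0 : (0:ℝ) ≤ d := by linarith
      have h0 : (0:ℝ) ≤ (n:ℝ) ^ (d-1) := Real.rpow_nonneg (le_of_lt hN0) _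
      calc c * ((n:ℝ) ^ d - ((n:ℝ) - 1) ^ d) ≤ c * (d * (n:ℝ) ^ (d-1)) :=
            mul_le_mul_of_nonneg_left hkey (le_of_lt hc)
        _ ≤ c * (d * (n:ℝ) ^ (d-α)) := by
            exact mul_le_mul_of_nonneg_left (mul_le_mul_of_nonneg_left hexp hd0) (le_of_lt hc)
        _ = c * d * (n:ℝ) ^ (d-α) := by ring
    have hBO := (hball.sub B).add C
    refine hBO.congr' ?_ EventuallyEq.rfl
    filter_upwards [eventually_ge_atTop 1] with n hn
    rw [hsub n hn]
    ring
  · -- Part 2: lower bound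
    obtain ⟨K, hK0, hKw⟩ := hball.exists_pos
    rw [Asymptotics.isBigOWith_iff] at hKw
    obtain ⟨N₀, hN₀⟩ := eventually_atTop.1 hKw
    have hlow : ∀ n : ℕ, N₀ ≤ n →
        c * (n:ℝ) ^ d - K * (n:ℝ) ^ (d-α) ≤ ((S ^ n).card : ℝ) := by
      intro n hn
      have h := hN₀ n hn
      rw [Real.norm_eq_abs, Real.norm_eq_abs,
        abs_of_nonneg (Real.rpow_nonneg (Nat.cast_nonneg _) _)] at h
      have := abs_le.1 h
      linarith [this.1]
    -- basic rpow facts for casts of naturals ≥ 1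
    have hfacts : ∀ n : ℕ, 1 ≤ n → (1:ℝ) ≤ (n:ℝ) ∧ (0:ℝ) < (n:ℝ) ∧
        (n:ℝ) ^ α * (n:ℝ) ^ (d-α) = (n:ℝ) ^ d ∧ (1:ℝ) ≤ (n:ℝ) ^ (d-α) := by
      intro n hn
      have h1 : (1:ℝ) ≤ (n:ℝ) := by exact_mod_cast hn
      have h0 : (0:ℝ) < (n:ℝ) := by linarith
      refine ⟨h1, h0, ?_, ?_⟩
      · rw [← Real.rpow_add h0]; ring_nf
      · calc (1:ℝ) = (n:ℝ) ^ (0:ℝ) := (Real.rpow_zero _).symm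
          _ ≤ (n:ℝ) ^ (d-α) := Real.rpow_le_rpow_of_exponent_le h1 hdα
    have hceil : ∀ T : ℝ, 0 ≤ T → ∀ n : ℕ, ⌈T ^ α⁻¹⌉₊ ≤ n → T ≤ (n:ℝ) ^ α := by
      intro T hT n hn
      have h1 : T ^ α⁻¹ ≤ (n:ℝ) := (Nat.le_ceil _).trans (by exact_mod_cast hn)
      calc T = (T ^ α⁻¹) ^ α := (Real.rpow_inv_rpow hT (ne_of_gt hα)).symm
        _ ≤ (n:ℝ) ^ α := Real.rpow_le_rpow (Real.rpow_nonneg hT _) h1 (le_of_lt hα)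
    have hub : ∀ B : ℕ, ∃ m, B < (S ^ m).card := by
      intro B
      set T : ℝ := ((B:ℝ) + 1 + K) / c with hT
      have hT0 : 0 ≤ T := by positivity
      set m : ℕ := max (max N₀ 1) ⌈T ^ α⁻¹⌉₊ with hm
      have hm1 : 1 ≤ m := le_trans (le_max_right N₀ 1) (le_max_left _ _)
      obtain ⟨h1, h0, hmd, h2⟩ := hfacts m hm1
      have hmα : T ≤ (m:ℝ) ^ α := hceil T hT0 m (le_max_right _ _)
      have hcT : c * T = (B:ℝ) + 1 + K := by
        rw [hT]; field_simp
      have hlb := hlow m (le_trans (le_max_left N₀ 1) (le_max_left _ _))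
      have hq : (B:ℝ) + 1 ≤ ((S ^ m).card : ℝ) := by
        have hcm : (B:ℝ) + 1 + K ≤ c * (m:ℝ) ^ α := by
          rw [← hcT]
          exact mul_le_mul_of_nonneg_left hmα (le_of_lt hc)
        nlinarith [Real.rpow_nonneg (le_of_lt h0) (d-α)]
      have : (B:ℝ) < ((S ^ m).card : ℝ) := by linarith
      exact ⟨m, by exact_mod_cast this⟩
    have hne : ∀ n : ℕ, 1 ≤ n → (S ^ n \ S ^ (n-1)).Nonempty :=
      fun n hn => sphere_nonempty_of_unbounded S hone hub hn
    have hkey : ∀ n : ℕ, 1 ≤ n →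
        (S ^ n).card ≤ (2*n+1) * (S ^ n \ S ^ (n-1)).card :=
      fun n hn => ball_card_le_sphere S hsym hone hex hn (hne (2*n) (by omega))
    set N : ℕ := max (max N₀ 1) ⌈(2*K/c) ^ α⁻¹⌉₊ with hN
    have hN1 : 1 ≤ N := le_trans (le_max_right N₀ 1) (le_max_left _ _)
    have hNpos : (0:ℝ) < (N:ℝ) ^ (d-1) :=
      Real.rpow_pos_of_pos (by exact_mod_cast hN1) _
    refine ⟨min (c/6) (((N:ℝ) ^ (d-1))⁻¹), lt_min (by positivity) (by positivity), ?_⟩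
    intro n hn
    obtain ⟨h1, h0, hnd, h2⟩ := hfacts n hn
    have hσpos : (1:ℝ) ≤ ((S ^ n \ S ^ (n-1)).card : ℝ) := by
      have := Finset.Nonempty.card_pos (hne n hn)
      exact_mod_cast this
    have hσ0 : (0:ℝ) ≤ ((S ^ n \ S ^ (n-1)).card : ℝ) := by linarith
    have hrnn : (0:ℝ) ≤ (n:ℝ) ^ (d-1) := Real.rpow_nonneg (le_of_lt h0) _
    rcases le_or_gt N n with hcase | hcase
    · -- large n
      have hnN₀ : N₀ ≤ n := le_trans (le_trans (le_max_left N₀ 1) (le_max_left _ _)) hcase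
      have hKn : K * (n:ℝ) ^ (d-α) ≤ (c/2) * (n:ℝ) ^ d := by
        have hnα : 2*K/c ≤ (n:ℝ) ^ α :=
          hceil (2*K/c) (by positivity) n (le_trans (le_max_right _ _) hcase)
        have : 2*K ≤ c * (n:ℝ) ^ α := by
          rw [div_le_iff₀ hc] at hnα; linarith [hnα]
        nlinarith [Real.rpow_nonneg (le_of_lt h0) (d-α), Real.rpow_nonneg (le_of_lt h0) α]
      have hball_lb : (c/2) * (n:ℝ) ^ d ≤ ((S ^ n).card : ℝ) := by
        have := hlow n hnN₀
        linarith
      have hkeyn := hkey n hn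
      have hkeyr : ((S ^ n).card : ℝ) ≤ (2*(n:ℝ)+1) * ((S ^ n \ S ^ (n-1)).card : ℝ) := by
        exact_mod_cast hkeyn
      have h3n : (2*(n:ℝ)+1) ≤ 3*(n:ℝ) := by linarith
      have hstep : (c/2) * (n:ℝ) ^ d ≤ 3*(n:ℝ) * ((S ^ n \ S ^ (n-1)).card : ℝ) := by
        calc (c/2) * (n:ℝ) ^ d ≤ (2*(n:ℝ)+1) * ((S ^ n \ S ^ (n-1)).card : ℝ) :=
              le_trans hball_lb hkeyr
          _ ≤ 3*(n:ℝ) * ((S ^ n \ S ^ (n-1)).card : ℝ) :=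
              mul_le_mul_of_nonneg_right h3n hσ0
      have hpow1 : (n:ℝ) ^ d = (n:ℝ) ^ (d-1) * (n:ℝ) := by
        rw [← Real.rpow_add_one (ne_of_gt h0)]; ring_nf
      have hfin : (c/6) * (n:ℝ) ^ (d-1) ≤ ((S ^ n \ S ^ (n-1)).card : ℝ) := by
        rw [hpow1] at hstep
        nlinarith
      calc min (c/6) (((N:ℝ) ^ (d-1))⁻¹) * (n:ℝ) ^ (d-1)
          ≤ (c/6) * (n:ℝ) ^ (d-1) :=
            mul_le_mul_of_nonneg_right (min_le_left _ _) hrnn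
        _ ≤ _ := hfin
    · -- small n
      have hnN : (n:ℝ) ^ (d-1) ≤ (N:ℝ) ^ (d-1) :=
        Real.rpow_le_rpow (le_of_lt h0) (by exact_mod_cast (le_of_lt hcase)) hd1
      calc min (c/6) (((N:ℝ) ^ (d-1))⁻¹) * (n:ℝ) ^ (d-1)
          ≤ ((N:ℝ) ^ (d-1))⁻¹ * (N:ℝ) ^ (d-1) := by
            apply mul_le_mul (min_le_right _ _) hnN hrnn (by positivity)
        _ = 1 := inv_mul_cancel₀ (ne_of_gt hNpos)
        _ ≤ _ := hσpos
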